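/- Fix a discretization and indices q̂ ∈ {0,…,N_φ−1} and p̂ ∈ {0,…,N_s−1}. Then Σ_{i,j=0}^{N_x−1} ω^rd(φ_{q̂}, x_{ij}·θ_{q̂} − s_{p̂}) ≤ √8 / δ_x². -/

import Mathlib

open MeasureTheory Real Set Filter
open scoped BigOperators ENNReal Topology

noncomputable section

/-- The spatial domain: the open Euclidean unit ball in the plane. -/
def Omg : Set (ℝ × ℝ) := {x : ℝ × ℝ | x.1 ^ 2 + x.2 ^ 2 < 1}

/-- The sinogram domain `[0,π) × (−1,1)`. -/
def Sino : Set (ℝ × ℝ) := Ico (0 : ℝ) π ×ˢ Ioo (-1 : ℝ) 1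

/-- `κ(φ) = min(1/|cos φ|, 1/|sin φ|)`. -/
def kap (φ : ℝ) : ℝ := min (1 / |cos φ|) (1 / |sin φ|)

/-- `s̄(φ) = (δ_x/2)(|cos φ| + |sin φ|)`. -/
def sbar (dx φ : ℝ) : ℝ := dx / 2 * (|cos φ| + |sin φ|)

/-- `s̲(φ) = (δ_x/2)·||cos φ| − |sin φ||`. -/
def sund (dx φ : ℝ) : ℝ := dx / 2 * |(|cos φ| - |sin φ|)|

open Classical in
/-- The ray-driven weight function `ω^rd(φ,t)` (for spatial resolution `dx`). -/
def wrd (dx φ t : ℝ) : ℝ :=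
  (1 / dx) *
    (if |t| < sund dx φ then kap φ
    else if |t| < sbar dx φ then (sbar dx φ - |t|) / (dx * |cos φ * sin φ|)
    else if (∃ k : ℤ, φ = k * (π / 2)) ∧ |t| = sbar dx φ then 1 / 2
    else 0)

/-- The pixel-driven weight function `ω^pd(t)` (for detector resolution `ds`). -/
def wpd (ds t : ℝ) : ℝ := (1 / ds ^ 2) * max (ds - |t|) 0

/-- The Radon transform, as a pointwise line-integral formula:
`[Rf](φ,s) = ∫ f(s·θ_φ + t·θ_φ^⊥) dt`. -/
def Radon (f : ℝ × ℝ → ℝ) (φ s : ℝ) : ℝ :=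
  ∫ t : ℝ, f (s * cos φ - t * sin φ, s * sin φ + t * cos φ)

/-- The backprojection `[R*g](x) = ∫_0^π g(φ, x·θ_φ) dφ`. -/
def Backproj (g : ℝ × ℝ → ℝ) (x : ℝ × ℝ) : ℝ :=
  ∫ φ in Ico (0 : ℝ) π, g (φ, x.1 * cos φ + x.2 * sin φ)

/-- A discretization: spatial resolution `N_x`, detector resolution `N_s`, and
`N_φ` strictly increasing angles in `[0,π)`. -/
structure Disc where
  Nx : ℕ
  Nx_pos : 0 < Nx
  Ns : ℕ
  Ns_pos : 0 < Ns
  Nphi : ℕ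
  Nphi_pos : 0 < Nphi
  ang : ℕ → ℝ
  ang_mono : ∀ q q', q < q' → q' < Nphi → ang q < ang q'
  ang_mem : ∀ q, q < Nphi → ang q ∈ Ico (0 : ℝ) π

namespace Disc

variable (D : Disc)

/-- Spatial resolution `δ_x = 2/N_x`. -/
def dx : ℝ := 2 / D.Nx

/-- Detector resolution `δ_s = 2/N_s`. -/
def ds : ℝ := 2 / D.Ns

/-- Pixel centers `x_{ij}`. -/
def xc (i j : ℕ) : ℝ × ℝ := ((i + 1 / 2) * D.dx - 1, (j + 1 / 2) * D.dx - 1)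

/-- Spatial pixels `X_{ij}` (closed squares with center `x_{ij}` and side `δ_x`). -/
def Xpix (i j : ℕ) : Set (ℝ × ℝ) :=
  Icc ((D.xc i j).1 - D.dx / 2) ((D.xc i j).1 + D.dx / 2) ×ˢ
    Icc ((D.xc i j).2 - D.dx / 2) ((D.xc i j).2 + D.dx / 2)

/-- Detector pixel centers `s_p`. -/
def sc (p : ℕ) : ℝ := (p + 1 / 2) * D.ds - 1

/-- Detector pixels `S_p`. -/
def Spix (p : ℕ) : Set ℝ := Ico (D.sc p - D.ds / 2) (D.sc p + D.ds / 2)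

/-- Lower endpoint of the angular pixel `Φ_q`. -/
def philow (q : ℕ) : ℝ := if q = 0 then 0 else (D.ang (q - 1) + D.ang q) / 2

/-- Upper endpoint of the angular pixel `Φ_q`. -/
def phihigh (q : ℕ) : ℝ := if q = D.Nphi - 1 then π else (D.ang q + D.ang (q + 1)) / 2

/-- Angular pixels `Φ_q`. -/
def Phipix (q : ℕ) : Set ℝ := Ico (D.philow q) (D.phihigh q)

/-- Angular resolution `δ_φ = max_q |Φ_q|`. -/
def dphi : ℝ :=
  (Finset.range D.Nphi).sup' (Finset.nonempty_range_iff.mpr D.Nphi_pos.ne')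
    fun q => D.phihigh q - D.philow q

/-- The argument `x_{ij}·θ_q − s_p` at which weights are evaluated. -/
def off (i j q p : ℕ) : ℝ :=
  (D.xc i j).1 * cos (D.ang q) + (D.xc i j).2 * sin (D.ang q) - D.sc p

/-- Generic convolutional discretization of the Radon transform with weight `w`. -/
def discRadon (w : ℝ → ℝ → ℝ) (f : ℝ × ℝ → ℝ) (y : ℝ × ℝ) : ℝ :=
  ∑ q ∈ Finset.range D.Nphi, ∑ p ∈ Finset.range D.Ns,
    Set.indicator (D.Phipix q ×ˢ D.Spix p) (fun _ => (1 : ℝ)) y *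
      ∑ i ∈ Finset.range D.Nx, ∑ j ∈ Finset.range D.Nx,
        w (D.ang q) (D.off i j q p) * ∫ x in D.Xpix i j, f x

/-- Generic convolutional discretization of the backprojection with weight `w`. -/
def discBackproj (w : ℝ → ℝ → ℝ) (g : ℝ × ℝ → ℝ) (x : ℝ × ℝ) : ℝ :=
  ∑ i ∈ Finset.range D.Nx, ∑ j ∈ Finset.range D.Nx,
    Set.indicator (D.Xpix i j) (fun _ => (1 : ℝ)) x *
      ∑ q ∈ Finset.range D.Nphi, ∑ p ∈ Finset.range D.Ns,
        w (D.ang q) (D.off i j q p) * ∫ y in D.Phipix q ×ˢ D.Spix p, g y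

end Disc


namespace RW

def clampF (m x : ℝ) : ℝ := max (-m) (min m x)

lemma clampF_le (m x : ℝ) (hm : 0 ≤ m) : clampF m x ≤ m :=
  max_le (by linarith) (min_le_left _ _)

lemma le_clampF (m x : ℝ) : -m ≤ clampF m x := le_max_left _ _

lemma wrd_neg (dx φ t : ℝ) : wrd dx φ (-t) = wrd dx φ t := by
  unfold wrd
  rw [abs_neg]

lemma not_special (φ : ℝ) (h : cos φ * sin φ ≠ 0) : ¬ (∃ k : ℤ, φ = k * (π / 2)) := by
  rintro ⟨k, rfl⟩
  apply h
  have : sin (2 * ((k:ℝ) * (π/2))) = 0 := by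
    have : (2:ℝ) * ((k:ℝ) * (π/2)) = (k:ℝ) * π := by ring
    rw [this]
    exact Real.sin_int_mul_pi k
  rw [Real.sin_two_mul] at this
  linarith

lemma wrd_eq (dx φ a b t : ℝ) (hdx : 0 < dx) (ha : 0 < a) (hb : 0 < b)
    (hab : (a = |cos φ| ∧ b = |sin φ|) ∨ (a = |sin φ| ∧ b = |cos φ|)) :
    wrd dx φ t = (clampF (dx*b/2) (t + dx*a/2) - clampF (dx*b/2) (t - dx*a/2)) / (dx^2*a*b) := by
  have hcs : |cos φ * sin φ| = a * b := by
    rw [abs_mul]; rcases hab with ⟨h1, h2⟩ | ⟨h1, h2⟩ <;> rw [h1, h2]; ring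
  have hcs0 : cos φ * sin φ ≠ 0 := by
    intro h0
    rw [h0, abs_zero] at hcs
    nlinarith
  have hk : kap φ = min (1/a) (1/b) := by
    rcases hab with ⟨h1, h2⟩ | ⟨h1, h2⟩ <;> rw [kap, h1, h2]
    exact min_comm _ _
  have hs : sbar dx φ = dx/2 * (a + b) := by
    rw [sbar]; rcases hab with ⟨h1, h2⟩ | ⟨h1, h2⟩ <;> rw [h1, h2] <;> ring
  have hu : sund dx φ = dx/2 * |a - b| := by
    rcases hab with ⟨h1, h2⟩ | ⟨h1, h2⟩ <;> rw [sund, h1, h2]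
    rw [abs_sub_comm]
  have hns := not_special φ hcs0
  have hdxa : 0 < dx * a := mul_pos hdx ha
  have hdxb : 0 < dx * b := mul_pos hdx hb
  have hD : (dx^2*a*b) ≠ 0 := by positivity
  rw [wrd, hk, hs, hu, hcs, eq_div_iff hD]
  simp only [hns, false_and, if_false]
  have k1 : dx/2*(a-b) ≤ dx/2*|a-b| :=
    mul_le_mul_of_nonneg_left (le_abs_self _) (by positivity)
  have k2 : dx/2*(b-a) ≤ dx/2*|a-b| :=
    mul_le_mul_of_nonneg_left (by rw [abs_sub_comm]; exact le_abs_self _) (by positivity)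
  split_ifs with h1 h2
  · -- plateau
    rcases abs_lt.mp h1 with ⟨hl, hr⟩
    have hA := abs_nonneg (a - b)
    rcases le_total a b with hab2 | hab2
    · rw [abs_of_nonpos (by linarith : a - b ≤ 0)] at hl hr
      rw [min_eq_right (one_div_le_one_div_of_le ha hab2)]
      rw [clampF, clampF,
        min_eq_right (by linarith : t + dx*a/2 ≤ dx*b/2),
        max_eq_right (by linarith : -(dx*b/2) ≤ t + dx*a/2),
        min_eq_right (by linarith : t - dx*a/2 ≤ dx*b/2),
        max_eq_right (by linarith : -(dx*b/2) ≤ t - dx*a/2)]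
      field_simp
      ring
    · rw [abs_of_nonneg (by linarith : 0 ≤ a - b)] at hl hr
      rw [min_eq_left (one_div_le_one_div_of_le hb hab2)]
      rw [clampF, clampF,
        min_eq_left (by linarith : dx*b/2 ≤ t + dx*a/2),
        max_eq_right (by linarith : -(dx*b/2) ≤ dx*b/2),
        min_eq_right (by linarith : t - dx*a/2 ≤ dx*b/2),
        max_eq_left (by linarith : t - dx*a/2 ≤ -(dx*b/2))]
      field_simp
      ring
  · -- ramp
    have h1' : dx/2*|a-b| ≤ |t| := not_lt.mp h1
    rcases le_or_gt 0 t with ht | ht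
    · rw [abs_of_nonneg ht] at h1' h2 ⊢
      rw [clampF, clampF,
        min_eq_left (by linarith : dx*b/2 ≤ t + dx*a/2),
        max_eq_right (by linarith : -(dx*b/2) ≤ dx*b/2),
        min_eq_right (by linarith : t - dx*a/2 ≤ dx*b/2),
        max_eq_right (by linarith : -(dx*b/2) ≤ t - dx*a/2)]
      field_simp
      ring
    · rw [abs_of_neg ht] at h1' h2 ⊢
      rw [clampF, clampF,
        min_eq_right (by linarith : t + dx*a/2 ≤ dx*b/2),
        max_eq_right (by linarith : -(dx*b/2) ≤ t + dx*a/2),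
        min_eq_right (by linarith : t - dx*a/2 ≤ dx*b/2),
        max_eq_left (by linarith : t - dx*a/2 ≤ -(dx*b/2))]
      field_simp
      ring
  · -- zero
    have h2' : dx/2*(a+b) ≤ |t| := not_lt.mp h2
    rcases le_or_gt 0 t with ht | ht
    · rw [abs_of_nonneg ht] at h2'
      rw [clampF, clampF,
        min_eq_left (by linarith : dx*b/2 ≤ t + dx*a/2),
        max_eq_right (by linarith : -(dx*b/2) ≤ dx*b/2),
        min_eq_left (by linarith : dx*b/2 ≤ t - dx*a/2),
        max_eq_right (by linarith : -(dx*b/2) ≤ dx*b/2)]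
      ring
    · rw [abs_of_neg ht] at h2'
      rw [clampF, clampF,
        min_eq_right (by linarith : t + dx*a/2 ≤ dx*b/2),
        max_eq_left (by linarith : t + dx*a/2 ≤ -(dx*b/2)),
        min_eq_right (by linarith : t - dx*a/2 ≤ dx*b/2),
        max_eq_left (by linarith : t - dx*a/2 ≤ -(dx*b/2))]
      ring

lemma tel (N : ℕ) (dx a b q : ℝ) (hb : 0 ≤ dx * b) :
    ∑ i ∈ Finset.range N,
      (clampF (dx*b/2) (((((i:ℕ):ℝ)+1/2)*dx - 1)*a + q + dx*a/2)
        - clampF (dx*b/2) (((((i:ℕ):ℝ)+1/2)*dx - 1)*a + q - dx*a/2)) ≤ dx * b := by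
  have key : ∀ i ∈ Finset.range N,
      (clampF (dx*b/2) ((((i:ℝ)+1/2)*dx - 1)*a + q + dx*a/2)
        - clampF (dx*b/2) ((((i:ℝ)+1/2)*dx - 1)*a + q - dx*a/2))
      = (fun n : ℕ => clampF (dx*b/2) (((n:ℝ)*dx - 1)*a + q)) (i+1)
        - (fun n : ℕ => clampF (dx*b/2) (((n:ℝ)*dx - 1)*a + q)) i := by
    intro i _
    simp only [Nat.cast_add, Nat.cast_one]
    congr 1 <;> congr 1 <;> ring
  rw [Finset.sum_congr rfl key,
    Finset.sum_range_sub (fun n : ℕ => clampF (dx*b/2) (((n:ℝ)*dx - 1)*a + q))]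
  have u1 : clampF (dx*b/2) (((N:ℝ)*dx - 1)*a + q) ≤ dx*b/2 := clampF_le _ _ (by linarith)
  have u2 : -(dx*b/2) ≤ clampF (dx*b/2) ((((0:ℕ):ℝ)*dx - 1)*a + q) := le_clampF _ _
  linarith

lemma row (N : ℕ) (dx φ a b q : ℝ) (hdx : 0 < dx) (ha : 0 < a) (hb : 0 < b)
    (hab : (a = |cos φ| ∧ b = |sin φ|) ∨ (a = |sin φ| ∧ b = |cos φ|)) :
    ∑ i ∈ Finset.range N, wrd dx φ ((((i:ℝ)+1/2)*dx - 1)*a + q) ≤ 1/(dx*a) := by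
  have : ∀ i ∈ Finset.range N, wrd dx φ ((((i:ℝ)+1/2)*dx - 1)*a + q)
      = (clampF (dx*b/2) ((((i:ℝ)+1/2)*dx - 1)*a + q + dx*a/2)
        - clampF (dx*b/2) ((((i:ℝ)+1/2)*dx - 1)*a + q - dx*a/2)) / (dx^2*a*b) := by
    intro i _
    exact wrd_eq dx φ a b _ hdx ha hb hab
  rw [Finset.sum_congr rfl this, ← Finset.sum_div]
  rw [div_le_iff₀ (by positivity)]
  have := tel N dx a b q (by positivity)
  calc _ ≤ dx * b := this
    _ = 1/(dx*a) * (dx^2*a*b) := by field_simp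

lemma deg (dx φ t : ℝ) (hdx : 0 < dx) (h : cos φ = 0 ∨ sin φ = 0) :
    wrd dx φ t ≤ if |t| = sbar dx φ then 1/(2*dx) else 0 := by
  have hk : kap φ = 0 := by
    rcases h with h | h <;> rw [kap, h, abs_zero, div_zero]
    · exact min_eq_left (by positivity)
    · exact min_eq_right (by positivity)
  have hsb : sund dx φ = sbar dx φ := by
    rcases h with h | h <;> rw [sund, sbar, h, abs_zero]
    · rw [zero_sub, abs_neg, abs_abs, zero_add]
    · rw [sub_zero, abs_abs, add_zero]
  rw [wrd, hk, hsb]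
  split_ifs with h1 h2 h3 h4 <;>
    first
      | positivity
      | linarith
      | (simp only [mul_zero]; positivity)
      | (exact absurd h3.2 h4)
      | (rw [mul_zero])
      | (rw [one_div, one_div, mul_inv, mul_comm])
      | skip
  all_goals simp_all

lemma abs_ind (x v c : ℝ) (hv : 0 ≤ v) (hc : 0 ≤ c) :
    (if |x| = v then c else 0) ≤ (if x = v then c else 0) + (if x = -v then c else 0) := by
  by_cases h1 : |x| = v
  · rcases (abs_eq hv).mp h1 with h | h <;> simp [h1, h] <;> split_ifs <;> linarith
  · simp [h1]
    split_ifs <;> linarith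

lemma sum_if_le (N : ℕ) (u : ℕ → ℝ) (hu : ∀ i j, u i = u j → i = j) (v c : ℝ) (hc : 0 ≤ c) :
    ∑ i ∈ Finset.range N, (if u i = v then c else 0) ≤ c := by
  classical
  rw [Finset.sum_ite, Finset.sum_const_zero, add_zero, Finset.sum_const]
  have hcard : ((Finset.range N).filter (fun i => u i = v)).card ≤ 1 := by
    apply Finset.card_le_one.mpr
    intro i hi j hj
    simp only [Finset.mem_filter] at hi hj
    exact hu i j (hi.2.trans hj.2.symm)
  calc ((Finset.range N).filter (fun i => u i = v)).card • c
      = (((Finset.range N).filter (fun i => u i = v)).card : ℝ) * c := by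
        rw [nsmul_eq_mul]
    _ ≤ 1 * c := by
        apply mul_le_mul_of_nonneg_right _ hc
        exact_mod_cast hcard
    _ = c := one_mul c

end RW


set_option maxHeartbeats 1600000 in
open RW in
/-- the sum of ray-driven weights over all spatial pixels is at most `√8/δ_x²`. -/
theorem rayWeight_space_sum (D : Disc) (qh ph : ℕ) (hq : qh < D.Nphi) (hp : ph < D.Ns) :
    ∑ i ∈ Finset.range D.Nx, ∑ j ∈ Finset.range D.Nx,
        wrd D.dx (D.ang qh) (D.off i j qh ph)
      ≤ Real.sqrt 8 / D.dx ^ 2 := by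
  classical
  have hφ := D.ang_mem qh hq
  set φ := D.ang qh with hφdef
  have hNx : (0:ℝ) < (D.Nx:ℝ) := by exact_mod_cast D.Nx_pos
  have hdx : (0:ℝ) < D.dx := by rw [Disc.dx]; positivity
  have hNdx : (D.Nx : ℝ) * D.dx = 2 := by rw [Disc.dx]; field_simp
  have h8 : Real.sqrt 8 ^ 2 = 8 := Real.sq_sqrt (by norm_num)
  have h8n : (0:ℝ) ≤ Real.sqrt 8 := Real.sqrt_nonneg 8
  have pyth : sin φ ^ 2 + cos φ ^ 2 = 1 := sin_sq_add_cos_sq φ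
  have hoff : ∀ i j : ℕ, D.off i j qh ph
      = (((i:ℝ)+1/2)*D.dx - 1) * cos φ + ((((j:ℝ)+1/2)*D.dx - 1) * sin φ - D.sc ph) := by
    intro i j
    simp only [Disc.off, Disc.xc, ← hφdef]
    ring
  by_cases hcs : cos φ * sin φ = 0
  · -- degenerate case
    have hone : |cos φ| + |sin φ| = 1 := by
      rcases mul_eq_zero.mp hcs with h | h <;> rw [h, abs_zero]
      · nlinarith [abs_nonneg (sin φ), sq_abs (sin φ)]
      · nlinarith [abs_nonneg (cos φ), sq_abs (cos φ)]
    have hsbar : sbar D.dx φ = D.dx/2 := by rw [sbar, hone, mul_one]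
    have step1 : ∀ i j : ℕ, wrd D.dx φ (D.off i j qh ph)
        ≤ if |D.off i j qh ph| = D.dx/2 then 1/(2*D.dx) else 0 := by
      intro i j
      have := deg D.dx φ (D.off i j qh ph) hdx (mul_eq_zero.mp hcs)
      rwa [hsbar] at this
    have h2le : (2:ℝ) ≤ Real.sqrt 8 := by nlinarith [h8, h8n]
    have hN2 : (D.Nx:ℝ) = 2/D.dx := (eq_div_iff (ne_of_gt hdx)).mpr hNdx
    have hfin : (D.Nx:ℝ) * (1/D.dx) ≤ Real.sqrt 8 / D.dx ^ 2 := by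
      rw [hN2]
      calc 2/D.dx * (1/D.dx) = 2 / D.dx^2 := by field_simp
        _ ≤ Real.sqrt 8 / D.dx ^ 2 := by gcongr
    rcases mul_eq_zero.mp hcs with h0 | h0
    · -- cos φ = 0 : off depends only on j
      have hs0 : sin φ ≠ 0 := by
        intro hh; rw [h0, hh] at hone; simp at hone
      have hinj : ∀ (i : ℕ), ∀ j j' : ℕ,
          D.off i j qh ph = D.off i j' qh ph → j = j' := by
        intro i j j' hjj
        rw [hoff, hoff, h0] at hjj
        have h1 : (((j:ℝ)+1/2)*D.dx - 1) * sin φ = (((j':ℝ)+1/2)*D.dx - 1) * sin φ := by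
          linarith [hjj]
        have h2 := mul_right_cancel₀ hs0 h1
        have h3 : ((j:ℝ)+1/2) * D.dx = ((j':ℝ)+1/2) * D.dx := by linarith
        have h4 := mul_right_cancel₀ (ne_of_gt hdx) h3
        have : (j:ℝ) = (j':ℝ) := by linarith
        exact_mod_cast this
      have hInner : ∀ i : ℕ,
          ∑ j ∈ Finset.range D.Nx, (if |D.off i j qh ph| = D.dx/2 then 1/(2*D.dx) else 0)
            ≤ 1/D.dx := by
        intro i
        calc ∑ j ∈ Finset.range D.Nx, (if |D.off i j qh ph| = D.dx/2 then 1/(2*D.dx) else 0)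
            ≤ ∑ j ∈ Finset.range D.Nx,
              ((if D.off i j qh ph = D.dx/2 then 1/(2*D.dx) else 0)
                + (if D.off i j qh ph = -(D.dx/2) then 1/(2*D.dx) else 0)) :=
              Finset.sum_le_sum (fun j _ => abs_ind _ _ _ (by positivity) (by positivity))
          _ = (∑ j ∈ Finset.range D.Nx, (if D.off i j qh ph = D.dx/2 then 1/(2*D.dx) else 0))
              + ∑ j ∈ Finset.range D.Nx, (if D.off i j qh ph = -(D.dx/2) then 1/(2*D.dx) else 0) :=
              Finset.sum_add_distrib
          _ ≤ 1/(2*D.dx) + 1/(2*D.dx) :=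
              add_le_add
                (sum_if_le D.Nx (fun j => D.off i j qh ph) (hinj i) _ _ (by positivity))
                (sum_if_le D.Nx (fun j => D.off i j qh ph) (hinj i) _ _ (by positivity))
          _ = 1/D.dx := by ring
      calc ∑ i ∈ Finset.range D.Nx, ∑ j ∈ Finset.range D.Nx, wrd D.dx φ (D.off i j qh ph)
          ≤ ∑ i ∈ Finset.range D.Nx, ∑ j ∈ Finset.range D.Nx,
              (if |D.off i j qh ph| = D.dx/2 then 1/(2*D.dx) else 0) :=
            Finset.sum_le_sum (fun i _ => Finset.sum_le_sum (fun j _ => step1 i j))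
        _ ≤ ∑ i ∈ Finset.range D.Nx, 1/D.dx := Finset.sum_le_sum (fun i _ => hInner i)
        _ = (D.Nx:ℝ) * (1/D.dx) := by rw [Finset.sum_const, Finset.card_range, nsmul_eq_mul]
        _ ≤ Real.sqrt 8 / D.dx ^ 2 := hfin
    · -- sin φ = 0 : off depends only on i
      have hc0 : cos φ ≠ 0 := by
        intro hh; rw [h0, hh] at hone; simp at hone
      have hinj : ∀ (j : ℕ), ∀ i i' : ℕ,
          D.off i j qh ph = D.off i' j qh ph → i = i' := by
        intro j i i' hii
        rw [hoff, hoff, h0] at hii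
        have h1 : (((i:ℝ)+1/2)*D.dx - 1) * cos φ = (((i':ℝ)+1/2)*D.dx - 1) * cos φ := by
          linarith [hii]
        have h2 := mul_right_cancel₀ hc0 h1
        have h3 : ((i:ℝ)+1/2) * D.dx = ((i':ℝ)+1/2) * D.dx := by linarith
        have h4 := mul_right_cancel₀ (ne_of_gt hdx) h3
        have : (i:ℝ) = (i':ℝ) := by linarith
        exact_mod_cast this
      have hInner : ∀ j : ℕ,
          ∑ i ∈ Finset.range D.Nx, (if |D.off i j qh ph| = D.dx/2 then 1/(2*D.dx) else 0)
            ≤ 1/D.dx := by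
        intro j
        calc ∑ i ∈ Finset.range D.Nx, (if |D.off i j qh ph| = D.dx/2 then 1/(2*D.dx) else 0)
            ≤ ∑ i ∈ Finset.range D.Nx,
              ((if D.off i j qh ph = D.dx/2 then 1/(2*D.dx) else 0)
                + (if D.off i j qh ph = -(D.dx/2) then 1/(2*D.dx) else 0)) :=
              Finset.sum_le_sum (fun i _ => abs_ind _ _ _ (by positivity) (by positivity))
          _ = (∑ i ∈ Finset.range D.Nx, (if D.off i j qh ph = D.dx/2 then 1/(2*D.dx) else 0))
              + ∑ i ∈ Finset.range D.Nx, (if D.off i j qh ph = -(D.dx/2) then 1/(2*D.dx) else 0) :=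
              Finset.sum_add_distrib
          _ ≤ 1/(2*D.dx) + 1/(2*D.dx) :=
              add_le_add
                (sum_if_le D.Nx (fun i => D.off i j qh ph) (hinj j) _ _ (by positivity))
                (sum_if_le D.Nx (fun i => D.off i j qh ph) (hinj j) _ _ (by positivity))
          _ = 1/D.dx := by ring
      rw [Finset.sum_comm]
      calc ∑ j ∈ Finset.range D.Nx, ∑ i ∈ Finset.range D.Nx, wrd D.dx φ (D.off i j qh ph)
          ≤ ∑ j ∈ Finset.range D.Nx, ∑ i ∈ Finset.range D.Nx,
              (if |D.off i j qh ph| = D.dx/2 then 1/(2*D.dx) else 0) :=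
            Finset.sum_le_sum (fun j _ => Finset.sum_le_sum (fun i _ => step1 i j))
        _ ≤ ∑ j ∈ Finset.range D.Nx, 1/D.dx := Finset.sum_le_sum (fun j _ => hInner j)
        _ = (D.Nx:ℝ) * (1/D.dx) := by rw [Finset.sum_const, Finset.card_range, nsmul_eq_mul]
        _ ≤ Real.sqrt 8 / D.dx ^ 2 := hfin
  · -- nondegenerate case
    have hN2 : (D.Nx:ℝ) = 2/D.dx := (eq_div_iff (ne_of_gt hdx)).mpr hNdx
    have harith : ∀ c : ℝ, 0 < c → 1/2 ≤ c^2 →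
        (D.Nx:ℝ) * (1/(D.dx*c)) ≤ Real.sqrt 8 / D.dx^2 := by
      intro c hcp hc2
      have h2a : 2 ≤ Real.sqrt 8 * c := by
        nlinarith [h8, h8n, hcp, mul_nonneg h8n hcp.le]
      have key := mul_le_mul_of_nonneg_left h2a
        (le_of_lt (show (0:ℝ) < D.dx^2 by positivity))
      rw [hN2]
      have heq : 2/D.dx * (1/(D.dx*c)) = 2/(D.dx^2*c) := by field_simp
      rw [heq, div_le_div_iff₀ (by positivity) (by positivity)]
      nlinarith [key]
    have hc : cos φ ≠ 0 := fun h => hcs (by rw [h]; ring)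
    have hsn : sin φ ≠ 0 := fun h => hcs (by rw [h]; ring)
    have hsinpos : 0 < sin φ := by
      rcases hφ with ⟨h0, hpi⟩
      rcases lt_or_eq_of_le h0 with h0' | h0'
      · exact Real.sin_pos_of_pos_of_lt_pi h0' hpi
      · exfalso; apply hsn; rw [← h0']; exact Real.sin_zero
    have ha : (0:ℝ) < |cos φ| := abs_pos.mpr hc
    have hb : (0:ℝ) < |sin φ| := abs_pos.mpr hsn
    have hbs : |sin φ| = sin φ := abs_of_pos hsinpos
    rcases le_total (|sin φ|) (|cos φ|) with hba | hab
    · -- |sin| ≤ |cos| : telescope over i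
      have hrow : ∀ j : ℕ, ∑ i ∈ Finset.range D.Nx, wrd D.dx φ (D.off i j qh ph)
          ≤ 1/(D.dx * |cos φ|) := by
        intro j
        rcases hc.lt_or_gt with hneg | hpos
        · have heq : ∀ i ∈ Finset.range D.Nx, wrd D.dx φ (D.off i j qh ph)
              = wrd D.dx φ ((((i:ℝ)+1/2)*D.dx - 1) * |cos φ|
                + (-((((j:ℝ)+1/2)*D.dx - 1) * sin φ - D.sc ph))) := by
            intro i _
            rw [hoff]
            conv_rhs => rw [← wrd_neg]
            congr 1
            rw [abs_of_neg hneg]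
            ring
          rw [Finset.sum_congr rfl heq]
          exact row D.Nx D.dx φ (|cos φ|) (|sin φ|) _ hdx ha hb (Or.inl ⟨rfl, rfl⟩)
        · have heq : ∀ i ∈ Finset.range D.Nx, wrd D.dx φ (D.off i j qh ph)
              = wrd D.dx φ ((((i:ℝ)+1/2)*D.dx - 1) * |cos φ|
                + ((((j:ℝ)+1/2)*D.dx - 1) * sin φ - D.sc ph)) := by
            intro i _
            rw [hoff]
            congr 1
            rw [abs_of_pos hpos]
          rw [Finset.sum_congr rfl heq]
          exact row D.Nx D.dx φ (|cos φ|) (|sin φ|) _ hdx ha hb (Or.inl ⟨rfl, rfl⟩)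
      rw [Finset.sum_comm]
      calc ∑ j ∈ Finset.range D.Nx, ∑ i ∈ Finset.range D.Nx, wrd D.dx φ (D.off i j qh ph)
          ≤ ∑ j ∈ Finset.range D.Nx, 1/(D.dx * |cos φ|) :=
            Finset.sum_le_sum (fun j _ => hrow j)
        _ = (D.Nx:ℝ) * (1/(D.dx * |cos φ|)) := by
            rw [Finset.sum_const, Finset.card_range, nsmul_eq_mul]
        _ ≤ Real.sqrt 8 / D.dx ^ 2 := by
            apply harith _ ha
            nlinarith [sq_abs (sin φ), sq_abs (cos φ), abs_nonneg (sin φ)]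
    · -- |cos| ≤ |sin| : telescope over j
      have hrow : ∀ i : ℕ, ∑ j ∈ Finset.range D.Nx, wrd D.dx φ (D.off i j qh ph)
          ≤ 1/(D.dx * |sin φ|) := by
        intro i
        have heq : ∀ j ∈ Finset.range D.Nx, wrd D.dx φ (D.off i j qh ph)
            = wrd D.dx φ ((((j:ℝ)+1/2)*D.dx - 1) * |sin φ|
              + ((((i:ℝ)+1/2)*D.dx - 1) * cos φ - D.sc ph)) := by
          intro j _
          rw [hoff]
          congr 1
          rw [hbs]
          ring
        rw [Finset.sum_congr rfl heq]
        exact row D.Nx D.dx φ (|sin φ|) (|cos φ|) _ hdx hb ha (Or.inr ⟨rfl, rfl⟩)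
      calc ∑ i ∈ Finset.range D.Nx, ∑ j ∈ Finset.range D.Nx, wrd D.dx φ (D.off i j qh ph)
          ≤ ∑ i ∈ Finset.range D.Nx, 1/(D.dx * |sin φ|) :=
            Finset.sum_le_sum (fun i _ => hrow i)
        _ = (D.Nx:ℝ) * (1/(D.dx * |sin φ|)) := by
            rw [Finset.sum_const, Finset.card_range, nsmul_eq_mul]
        _ ≤ Real.sqrt 8 / D.dx ^ 2 := by
            apply harith _ hb
            nlinarith [sq_abs (sin φ), sq_abs (cos φ), abs_nonneg (cos φ)]
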